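/- For any relation R on values, the intersection of the simulation on communication trees with its opposite equals mutual simulation relative to the symmetrization of R: for all u, w, (u ⊑ᵣ w ∧ w ⊑ᵣ u) if and only if (u ⊑ᵢ w ∧ w ⊑ᵢ u), where I is the relation I f g ↔ (R f g ∧ R g f). -/

import Mathlib

/-! Coinductive communication trees, realized as the M-type of a polynomial
functor, together with the coinductively defined simulation relation. -/

/-- Shapes of nodes of communication trees. -/
inductive CommShape (V L : Type) : Type where
  | bot : CommShape V L
  | close : CommShape V L
  | label (k : L) : CommShape V L
  | pair : CommShape V L
  | val (f : V) : CommShape V L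

/-- Arities: `bot` and `close` have no children, `label` and `val` have one,
`pair` has two. -/
def commArity (V L : Type) : CommShape V L → Type
  | .bot => Empty
  | .close => Empty
  | .label _ => Unit
  | .pair => Bool
  | .val _ => Unit

/-- The polynomial functor of communication trees. -/
def CommP (V L : Type) : PFunctor := ⟨CommShape V L, commArity V L⟩

/-- The coinductive type of (possibly infinite) communication trees. -/
def Comm (V L : Type) : Type := (CommP V L).M

namespace Comm

variable {V L : Type}

/-- The empty communication. -/
def bot : Comm V L := PFunctor.M.mk ⟨CommShape.bot, Empty.elim⟩

/-- The close message. -/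
def close : Comm V L := PFunctor.M.mk ⟨CommShape.close, Empty.elim⟩

/-- A label followed by a continuation. -/
def label (k : L) (v : Comm V L) : Comm V L :=
  PFunctor.M.mk ⟨CommShape.label k, fun _ => v⟩

/-- A pair of communications (channel transmission). -/
def pair (v v' : Comm V L) : Comm V L :=
  PFunctor.M.mk ⟨CommShape.pair, fun b : Bool => if b then v else v'⟩

/-- A functional value followed by a continuation. -/
def val (f : V) (v : Comm V L) : Comm V L :=
  PFunctor.M.mk ⟨CommShape.val f, fun _ => v⟩

/-- One unfolding of the simulation relation: the clauses defining simulation. -/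
def SimStep (R : V → V → Prop) (S : Comm V L → Comm V L → Prop)
    (u w : Comm V L) : Prop :=
  u = Comm.bot ∨
  (u = Comm.close ∧ w = Comm.close) ∨
  (∃ k v v', u = Comm.label k v ∧ w = Comm.label k v' ∧ S v v') ∨
  (∃ a b a' b', u = Comm.pair a b ∧ w = Comm.pair a' b' ∧ S a a' ∧ S b b') ∨
  (∃ f g v v', u = Comm.val f v ∧ w = Comm.val g v' ∧ R f g ∧ S v v')

/-- Simulation modulo `R`: the largest relation closed under the clauses of
`SimStep`, i.e. the union of all post-fixed points. -/
def Sim (R : V → V → Prop) (u w : Comm V L) : Prop :=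
  ∃ S : Comm V L → Comm V L → Prop, (∀ a b, S a b → SimStep R S a b) ∧ S u w

/-- The height-`n` truncation of a communication tree. -/
def trunc : ℕ → Comm V L → Comm V L
  | 0, _ => Comm.bot
  | n + 1, w =>
    match PFunctor.M.dest w with
    | ⟨CommShape.bot, _⟩ => Comm.bot
    | ⟨CommShape.close, _⟩ => Comm.close
    | ⟨CommShape.label k, f⟩ => Comm.label k (trunc n (f ()))
    | ⟨CommShape.pair, f⟩ => Comm.pair (trunc n (f true)) (trunc n (f false))
    | ⟨CommShape.val g, f⟩ => Comm.val g (trunc n (f ()))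

end Comm

namespace CommAux

variable {V L : Type}

theorem shape_eq {s s' : CommShape V L} {f : commArity V L s → Comm V L}
    {g : commArity V L s' → Comm V L}
    (h : (PFunctor.M.mk ⟨s, f⟩ : Comm V L) = PFunctor.M.mk ⟨s', g⟩) :
    (⟨s, f⟩ : Σ a : CommShape V L, commArity V L a → Comm V L) = ⟨s', g⟩ := by
  have h2 := congrArg PFunctor.M.dest h
  exact (PFunctor.M.dest_mk _).symm.trans (h2.trans (PFunctor.M.dest_mk _))

theorem label_inj {k k' : L} {v v' : Comm V L}
    (h : Comm.label k v = Comm.label k' v') : k = k' ∧ v = v' := by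
  have h2 := shape_eq (h : (PFunctor.M.mk ⟨CommShape.label k, fun _ => v⟩ : Comm V L) = _)
  have hk : CommShape.label (V := V) k = CommShape.label k' := congrArg Sigma.fst h2
  injection hk with hk
  subst hk
  refine ⟨rfl, ?_⟩
  injection h2 with _ hf
  exact congrFun (hf) ()

theorem pair_inj {a b a' b' : Comm V L}
    (h : Comm.pair a b = Comm.pair a' b') : a = a' ∧ b = b' := by
  have h2 := shape_eq (h : (PFunctor.M.mk ⟨CommShape.pair, fun c : Bool => if c then a else b⟩ : Comm V L) = _)
  injection h2 with _ hf
  constructor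
  · have := congrFun (hf) true; simp at this; exact this
  · have := congrFun (hf) false; simp at this; exact this

theorem val_inj {f f' : V} {v v' : Comm V L}
    (h : Comm.val f v = Comm.val f' v') : f = f' ∧ v = v' := by
  have h2 := shape_eq (h : (PFunctor.M.mk ⟨CommShape.val f, fun _ => v⟩ : Comm V L) = _)
  have hk : CommShape.val (L := L) f = CommShape.val f' := congrArg Sigma.fst h2
  injection hk with hk
  subst hk
  refine ⟨rfl, ?_⟩
  injection h2 with _ hf
  exact congrFun (hf) ()

/-- shape of a constructor term -/
theorem shape_fst {s s' : CommShape V L} {f : commArity V L s → Comm V L}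
    {g : commArity V L s' → Comm V L}
    (h : (PFunctor.M.mk ⟨s, f⟩ : Comm V L) = PFunctor.M.mk ⟨s', g⟩) : s = s' :=
  congrArg Sigma.fst (shape_eq h)

theorem sim_step {R : V → V → Prop} {u w : Comm V L} (h : Comm.Sim R u w) :
    Comm.SimStep R (Comm.Sim R) u w := by
  obtain ⟨S, hS, hsw⟩ := h
  have hst := hS u w hsw
  rcases hst with h | h | ⟨k, v, v', h1, h2, h3⟩ | ⟨a, b, a', b', h1, h2, h3, h4⟩ |
    ⟨f, g, v, v', h1, h2, h3, h4⟩
  · exact Or.inl h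
  · exact Or.inr (Or.inl h)
  · exact Or.inr (Or.inr (Or.inl ⟨k, v, v', h1, h2, S, hS, h3⟩))
  · exact Or.inr (Or.inr (Or.inr (Or.inl ⟨a, b, a', b', h1, h2, ⟨S, hS, h3⟩, ⟨S, hS, h4⟩⟩)))
  · exact Or.inr (Or.inr (Or.inr (Or.inr ⟨f, g, v, v', h1, h2, h3, S, hS, h4⟩)))

theorem sim_mono {R R' : V → V → Prop} (hR : ∀ f g, R f g → R' f g) {u w : Comm V L}
    (h : Comm.Sim R u w) : Comm.Sim R' u w := by
  obtain ⟨S, hS, hsw⟩ := h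
  refine ⟨S, fun a b hab => ?_, hsw⟩
  rcases hS a b hab with h | h | ⟨k, v, v', h1, h2, h3⟩ | ⟨a1, b1, a1', b1', h1, h2, h3, h4⟩ |
    ⟨f, g, v, v', h1, h2, h3, h4⟩
  · exact Or.inl h
  · exact Or.inr (Or.inl h)
  · exact Or.inr (Or.inr (Or.inl ⟨k, v, v', h1, h2, h3⟩))
  · exact Or.inr (Or.inr (Or.inr (Or.inl ⟨a1, b1, a1', b1', h1, h2, h3, h4⟩)))
  · exact Or.inr (Or.inr (Or.inr (Or.inr ⟨f, g, v, v', h1, h2, hR _ _ h3, h4⟩)))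

theorem mutual_step (R : V → V → Prop) :
    ∀ a b : Comm V L, (Comm.Sim R a b ∧ Comm.Sim R b a) →
      Comm.SimStep (fun f g => R f g ∧ R g f)
        (fun a b => Comm.Sim R a b ∧ Comm.Sim R b a) a b := by
  rintro a b ⟨h1, h2⟩
  have s1 := sim_step h1
  have s2 := sim_step h2
  rcases s1 with h | ⟨ha, hb⟩ | ⟨k, v, v', ha, hb, hs⟩ | ⟨x, y, x', y', ha, hb, hs1, hs2⟩ |
    ⟨f, g, v, v', ha, hb, hr, hs⟩
  · exact Or.inl h
  · exact Or.inr (Or.inl ⟨ha, hb⟩)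
  · -- a = label k v, b = label k v'
    subst ha; subst hb
    rcases s2 with h | ⟨hc, _⟩ | ⟨k2, w2, w2', hc, hd, hs'⟩ | ⟨x, y, x', y', hc, _, _, _⟩ |
      ⟨f, g, w2, w2', hc, _, _, _⟩
    · exact absurd (shape_fst h) (by simp [Comm.label, Comm.bot] at *)
    · exact absurd (shape_fst hc) (by simp [Comm.label, Comm.close] at *)
    · obtain ⟨hk, hv⟩ := label_inj hc
      obtain ⟨_, hv'⟩ := label_inj hd
      subst hk; subst hv; subst hv'
      exact Or.inr (Or.inr (Or.inl ⟨k, v, v', rfl, rfl, hs, hs'⟩))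
    · exact absurd (shape_fst hc) (by simp [Comm.label, Comm.pair] at *)
    · exact absurd (shape_fst hc) (by simp [Comm.label, Comm.val] at *)
  · subst ha; subst hb
    rcases s2 with h | ⟨hc, _⟩ | ⟨k2, w2, w2', hc, _, _⟩ | ⟨z, t, z', t', hc, hd, hp1, hp2⟩ |
      ⟨f, g, w2, w2', hc, _, _, _⟩
    · exact absurd (shape_fst h) (by simp [Comm.pair, Comm.bot] at *)
    · exact absurd (shape_fst hc) (by simp [Comm.pair, Comm.close] at *)
    · exact absurd (shape_fst hc) (by simp [Comm.pair, Comm.label] at *)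
    · obtain ⟨hz, ht⟩ := pair_inj hc
      obtain ⟨hz', ht'⟩ := pair_inj hd
      subst hz; subst ht; subst hz'; subst ht'
      exact Or.inr (Or.inr (Or.inr (Or.inl ⟨x, y, x', y', rfl, rfl, ⟨hs1, hp1⟩, ⟨hs2, hp2⟩⟩)))
    · exact absurd (shape_fst hc) (by simp [Comm.pair, Comm.val] at *)
  · subst ha; subst hb
    rcases s2 with h | ⟨hc, _⟩ | ⟨k2, w2, w2', hc, _, _⟩ | ⟨z, t, z', t', hc, _, _, _⟩ |
      ⟨g2, f2, w2, w2', hc, hd, hr', hs'⟩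
    · exact absurd (shape_fst h) (by simp [Comm.val, Comm.bot] at *)
    · exact absurd (shape_fst hc) (by simp [Comm.val, Comm.close] at *)
    · exact absurd (shape_fst hc) (by simp [Comm.val, Comm.label] at *)
    · exact absurd (shape_fst hc) (by simp [Comm.val, Comm.pair] at *)
    · obtain ⟨hg, hw⟩ := val_inj hc
      obtain ⟨hf, hw'⟩ := val_inj hd
      subst hg; subst hw; subst hf; subst hw'
      exact Or.inr (Or.inr (Or.inr (Or.inr ⟨f, g, v, v', rfl, rfl, ⟨hr, hr'⟩, hs, hs'⟩)))

end CommAux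

/-- Mutual simulation modulo `R` coincides with mutual simulation modulo the
symmetrization of `R`. -/
theorem stmt_15 {V L : Type} (R : V → V → Prop) (u w : Comm V L) :
    (Comm.Sim R u w ∧ Comm.Sim R w u) ↔
      (Comm.Sim (fun f g => R f g ∧ R g f) u w ∧
        Comm.Sim (fun f g => R f g ∧ R g f) w u) := by
  constructor
  · rintro ⟨h1, h2⟩
    exact ⟨⟨_, CommAux.mutual_step R, h1, h2⟩, ⟨_, CommAux.mutual_step R, h2, h1⟩⟩
  · rintro ⟨h1, h2⟩
    exact ⟨CommAux.sim_mono (fun f g h => h.1) h1, CommAux.sim_mono (fun f g h => h.1) h2⟩
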